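/- For any unit vector ψ = Σ_{i=1}^{k} λ_i (a_i ⊗ b_i) of Schmidt rank at most k in C^d ⊗ C^d (with λ_i ≥ 0, Σ λ_i² = 1, orthonormal a_i and b_i, k ≤ d), the fully entangled fraction satisfies max over maximally entangled Φ of |⟨Φ, ψ⟩|² = (1/d)(Σ_{i=1}^{k} λ_i)² ≤ k/d. -/

import Mathlib

open scoped BigOperators ComplexConjugate ComplexOrder

noncomputable section

lemma key_sum {d k : ℕ} (U V : Matrix (Fin d) (Fin d) ℂ)
    (a b : Fin k → EuclideanSpace ℂ (Fin d)) (lam : Fin k → ℝ)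
    (ψ : Fin d × Fin d → ℂ)
    (hψ : ∀ p, ψ p = ∑ i, (lam i : ℂ) * (a i p.1 * b i p.2)) (c : ℂ) :
    (∑ p : Fin d × Fin d, conj (c * ∑ i, U p.1 i * V p.2 i) * ψ p)
      = conj c * ∑ j, (lam j : ℂ) *
          ∑ i, (∑ x, conj (U x i) * a j x) * (∑ y, conj (V y i) * b j y) := by
  simp only [hψ, Fintype.sum_prod_type, map_mul, map_sum, Finset.mul_sum, Finset.sum_mul,
    Finset.sum_mul_sum]
  conv_lhs => enter [2, x]; rw [Finset.sum_comm]
  rw [Finset.sum_comm]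
  refine Finset.sum_congr rfl fun j _ => ?_
  conv_lhs => enter [2, x]; rw [Finset.sum_comm]
  rw [Finset.sum_comm]
  refine Finset.sum_congr rfl fun i _ => ?_
  rw [Finset.sum_comm]
  refine Finset.sum_congr rfl fun y _ => Finset.sum_congr rfl fun x _ => ?_
  ring

lemma col_sq_sum {d : ℕ} {U : Matrix (Fin d) (Fin d) ℂ} (hU : U * star U = 1)
    (v : EuclideanSpace ℂ (Fin d)) (hv : (∑ x, conj (v x) * v x) = 1) :
    ∑ i, conj (∑ x, conj (U x i) * v x) * (∑ x, conj (U x i) * v x) = 1 := by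
  have hUc : ∀ x y : Fin d, (∑ i, U x i * conj (U y i)) = if x = y then 1 else 0 := by
    intro x y
    have := congrArg (fun M => M x y) hU
    simpa [Matrix.mul_apply, Matrix.one_apply, Matrix.star_apply] using this
  calc ∑ i, conj (∑ x, conj (U x i) * v x) * (∑ x, conj (U x i) * v x)
      = ∑ i, ∑ x, ∑ y, (U x i * conj (v x)) * (conj (U y i) * v y) := by
        simp only [map_sum, map_mul, Complex.conj_conj, Finset.sum_mul_sum]
    _ = ∑ x, ∑ y, (conj (v x) * v y) * ∑ i, U x i * conj (U y i) := by
        rw [Finset.sum_comm]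
        refine Finset.sum_congr rfl fun x _ => ?_
        rw [Finset.sum_comm]
        refine Finset.sum_congr rfl fun y _ => ?_
        rw [Finset.mul_sum]
        exact Finset.sum_congr rfl fun i _ => by ring
    _ = ∑ x, conj (v x) * v x := by
        simp [hUc, mul_ite, Finset.sum_ite_eq]
    _ = 1 := hv

lemma norm_col {d : ℕ} {U : Matrix (Fin d) (Fin d) ℂ} (hU : U * star U = 1)
    (v : EuclideanSpace ℂ (Fin d)) (hv : (∑ x, conj (v x) * v x) = 1) :
    ∑ i, ‖∑ x, conj (U x i) * v x‖ ^ 2 = 1 := by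
  have h := col_sq_sum hU v hv
  have h2 : ((∑ i, ‖∑ x, conj (U x i) * v x‖ ^ 2 : ℝ) : ℂ) = 1 := by
    push_cast
    rw [← h]
    refine Finset.sum_congr rfl fun i _ => ?_
    rw [mul_comm, Complex.mul_conj]
    norm_cast
    simp [Complex.normSq_eq_norm_sq]
  exact_mod_cast h2

lemma abs_sum_le_one {d : ℕ} (P Q : Fin d → ℂ) (hP : ∑ i, ‖P i‖ ^ 2 = 1)
    (hQ : ∑ i, ‖Q i‖ ^ 2 = 1) : ‖∑ i, P i * Q i‖ ≤ 1 := by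
  have h := norm_inner_le_norm (𝕜 := ℂ) (E := EuclideanSpace ℂ (Fin d))
    (WithLp.toLp 2 (fun i => conj (P i))) (WithLp.toLp 2 Q)
  rw [PiLp.inner_apply] at h
  simp only [RCLike.inner_apply, Complex.conj_conj] at h
  simp only [mul_comm (Q _)] at h
  rw [EuclideanSpace.norm_eq, EuclideanSpace.norm_eq] at h
  calc ‖∑ i, P i * Q i‖ ≤ _ := h
    _ ≤ 1 := by
      have h3 : ∀ i : Fin d,
          ‖(WithLp.toLp 2 (fun i => conj (P i)) : EuclideanSpace ℂ (Fin d)) i‖ ^ 2 = ‖P i‖ ^ 2 := by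
        intro i; simp [RCLike.norm_conj]
      simp only [h3, PiLp.toLp_apply, hP, hQ]
      simp

lemma exists_onb_ext {d k : ℕ} (hkd : k ≤ d) (a : Fin k → EuclideanSpace ℂ (Fin d))
    (ha : Orthonormal ℂ a) :
    ∃ u : OrthonormalBasis (Fin d) ℂ (EuclideanSpace ℂ (Fin d)),
      ∀ j : Fin k, u (Fin.castLE hkd j) = a j := by
  classical
  set v : Fin d → EuclideanSpace ℂ (Fin d) :=
    fun i => if h : (i : ℕ) < k then a ⟨i, h⟩ else 0 with hv
  set s : Set (Fin d) := {i : Fin d | (i : ℕ) < k} with hs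
  have hres : Orthonormal ℂ (s.restrict v) := by
    have heq : s.restrict v = a ∘ (fun i : s => (⟨(i : Fin d), i.2⟩ : Fin k)) := by
      funext i
      simp only [Set.restrict_apply, hv, Function.comp_apply]
      exact dif_pos i.2
    rw [heq]
    refine ha.comp _ (fun i j h => ?_)
    have h1 := congrArg Fin.val h
    exact Subtype.ext (Fin.ext h1)
  obtain ⟨u, hu⟩ := Orthonormal.exists_orthonormalBasis_extension_of_card_eq
    (by simp [finrank_euclideanSpace_fin]) hres
  refine ⟨u, fun j => ?_⟩
  have hmem : (Fin.castLE hkd j) ∈ s := j.2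
  rw [hu _ hmem]
  have : v (Fin.castLE hkd j) = a j := by
    rw [hv]
    simp only []
    rw [dif_pos (show ((Fin.castLE hkd j : Fin d) : ℕ) < k from j.2)]
    apply congrArg
    apply Fin.ext
    simp
  exact this

lemma basis_unitary {d : ℕ} (u : OrthonormalBasis (Fin d) ℂ (EuclideanSpace ℂ (Fin d))) :
    (Matrix.of fun x i => u i x) ∈ Matrix.unitaryGroup (Fin d) ℂ := by
  rw [Matrix.mem_unitaryGroup_iff']
  ext i j
  have := orthonormal_iff_ite.mp u.orthonormal i j
  rw [PiLp.inner_apply] at this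
  simp only [RCLike.inner_apply] at this
  simpa [Matrix.mul_apply, Matrix.star_apply, Matrix.one_apply, mul_comm] using this

/-- The fully entangled fraction of a pure state of Schmidt rank at most `k`:
the maximum over maximally entangled states `Φ = (U ⊗ V)ψ₊` of `|⟨Φ, ψ⟩|²`
equals `(∑ λᵢ)²/d`, which is at most `k/d`. -/
theorem fully_entangled_fraction (d k : ℕ) (hd : 0 < d) (hk : 0 < k) (hkd : k ≤ d)
    (a b : Fin k → EuclideanSpace ℂ (Fin d)) (lam : Fin k → ℝ)
    (ha : Orthonormal ℂ a) (hb : Orthonormal ℂ b)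
    (hlam : ∀ i, 0 ≤ lam i) (hnorm : ∑ i, lam i ^ 2 = 1)
    (ψ : Fin d × Fin d → ℂ)
    (hψ : ∀ p, ψ p = ∑ i, (lam i : ℂ) * (a i p.1 * b i p.2)) :
    IsGreatest
      {t : ℝ | ∃ U V : Matrix.unitaryGroup (Fin d) ℂ,
        t = ‖∑ p : Fin d × Fin d,
              conj ((1 / (Real.sqrt d : ℂ)) *
                ∑ i, (U : Matrix (Fin d) (Fin d) ℂ) p.1 i *
                     (V : Matrix (Fin d) (Fin d) ℂ) p.2 i) * ψ p‖ ^ 2}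
      ((∑ i, lam i) ^ 2 / d) ∧
    (∑ i, lam i) ^ 2 / d ≤ k / d := by
  classical
  have hd' : (0:ℝ) < d := by exact_mod_cast hd
  have hsq : Real.sqrt d ≠ 0 := ne_of_gt (Real.sqrt_pos.mpr hd')
  have hL0 : 0 ≤ ∑ i, lam i := Finset.sum_nonneg fun i _ => hlam i
  have hconjc : conj (1 / (Real.sqrt d : ℂ)) = 1 / (Real.sqrt d : ℂ) := by
    rw [map_div₀, map_one, Complex.conj_ofReal]
  have hnormc : ‖(1 / (Real.sqrt d : ℂ))‖ = 1 / Real.sqrt d := by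
    rw [norm_div, norm_one, Complex.norm_real, Real.norm_eq_abs,
      abs_of_nonneg (Real.sqrt_nonneg _)]
  have hasum : ∀ j, (∑ x, conj (a j x) * a j x) = 1 := by
    intro j
    have h := orthonormal_iff_ite.mp ha j j
    rw [PiLp.inner_apply] at h
    simpa [RCLike.inner_apply, RCLike.conj_mul] using h
  have hbsum : ∀ j, (∑ x, conj (b j x) * b j x) = 1 := by
    intro j
    have h := orthonormal_iff_ite.mp hb j j
    rw [PiLp.inner_apply] at h
    simpa [RCLike.inner_apply, RCLike.conj_mul] using h
  -- upper bound for arbitrary unitaries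
  have hub : ∀ U V : Matrix.unitaryGroup (Fin d) ℂ,
      ‖∑ p : Fin d × Fin d,
          conj ((1 / (Real.sqrt d : ℂ)) *
            ∑ i, (U : Matrix (Fin d) (Fin d) ℂ) p.1 i *
                 (V : Matrix (Fin d) (Fin d) ℂ) p.2 i) * ψ p‖ ^ 2
        ≤ (∑ i, lam i) ^ 2 / d := by
    intro U V
    rw [key_sum (U : Matrix (Fin d) (Fin d) ℂ) (V : Matrix (Fin d) (Fin d) ℂ) a b lam ψ hψ]
    have hUU : (U : Matrix (Fin d) (Fin d) ℂ) * star (U : Matrix (Fin d) (Fin d) ℂ) = 1 :=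
      Matrix.mem_unitaryGroup_iff.mp U.2
    have hVV : (V : Matrix (Fin d) (Fin d) ℂ) * star (V : Matrix (Fin d) (Fin d) ℂ) = 1 :=
      Matrix.mem_unitaryGroup_iff.mp V.2
    have hcj : ∀ j : Fin k,
        ‖∑ i, (∑ x, conj ((U : Matrix (Fin d) (Fin d) ℂ) x i) * a j x) *
              (∑ y, conj ((V : Matrix (Fin d) (Fin d) ℂ) y i) * b j y)‖ ≤ 1 := fun j =>
      abs_sum_le_one _ _ (norm_col hUU (a j) (hasum j)) (norm_col hVV (b j) (hbsum j))
    have hT : ‖∑ j, (lam j : ℂ) *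
        ∑ i, (∑ x, conj ((U : Matrix (Fin d) (Fin d) ℂ) x i) * a j x) *
             (∑ y, conj ((V : Matrix (Fin d) (Fin d) ℂ) y i) * b j y)‖ ≤ ∑ j, lam j := by
      refine (norm_sum_le _ _).trans (Finset.sum_le_sum fun j _ => ?_)
      rw [norm_mul]
      have h1 : ‖((lam j : ℝ) : ℂ)‖ = lam j := by
        rw [Complex.norm_real, Real.norm_eq_abs, abs_of_nonneg (hlam j)]
      rw [h1]
      calc lam j * _ ≤ lam j * 1 := mul_le_mul_of_nonneg_left (hcj j) (hlam j)
        _ = lam j := mul_one _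
    rw [norm_mul, hconjc, hnormc]
    calc (1 / Real.sqrt d * ‖_‖) ^ 2
        ≤ (1 / Real.sqrt d * ∑ j, lam j) ^ 2 := by
          apply pow_le_pow_left₀ (by positivity)
          exact mul_le_mul_of_nonneg_left hT (by positivity)
      _ = (∑ i, lam i) ^ 2 / d := by
          rw [mul_pow, div_pow, one_pow, Real.sq_sqrt hd'.le]
          ring
  refine ⟨⟨?_, ?_⟩, ?_⟩
  · -- membership: construct unitaries from extensions of a and b
    obtain ⟨u, hu⟩ := exists_onb_ext hkd a ha
    obtain ⟨w, hw⟩ := exists_onb_ext hkd b hb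
    refine ⟨⟨Matrix.of fun x i => u i x, basis_unitary u⟩,
            ⟨Matrix.of fun y i => w i y, basis_unitary w⟩, ?_⟩
    rw [key_sum (Matrix.of fun x i => u i x) (Matrix.of fun y i => w i y) a b lam ψ hψ]
    have hP : ∀ (j : Fin k) (i : Fin d),
        (∑ x, conj ((Matrix.of fun x i => u i x) x i) * a j x)
          = if i = Fin.castLE hkd j then 1 else 0 := by
      intro j i
      rw [show a j = u (Fin.castLE hkd j) from (hu j).symm]
      have h := orthonormal_iff_ite.mp u.orthonormal i (Fin.castLE hkd j)
      rw [PiLp.inner_apply] at h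
      simpa [RCLike.inner_apply, Matrix.of_apply, mul_comm] using h
    have hQ : ∀ j : Fin k,
        (∑ y, conj ((Matrix.of fun y i => w i y) y (Fin.castLE hkd j)) * b j y) = 1 := by
      intro j
      rw [show b j = w (Fin.castLE hkd j) from (hw j).symm]
      have h := orthonormal_iff_ite.mp w.orthonormal (Fin.castLE hkd j) (Fin.castLE hkd j)
      rw [PiLp.inner_apply] at h
      simpa [RCLike.inner_apply, Matrix.of_apply, RCLike.conj_mul] using h
    have hsum1 : ∀ j : Fin k,
        (∑ i, (∑ x, conj ((Matrix.of fun x i => u i x) x i) * a j x) *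
              (∑ y, conj ((Matrix.of fun y i => w i y) y i) * b j y)) = 1 := by
      intro j
      simp only [hP, ite_mul, one_mul, zero_mul]
      rw [Finset.sum_ite_eq' Finset.univ (Fin.castLE hkd j)]
      simpa using hQ j
    simp only [hsum1, mul_one]
    rw [hconjc]
    have hcast : (∑ j, ((lam j : ℝ) : ℂ)) = ((∑ j, lam j : ℝ) : ℂ) := by push_cast; rfl
    rw [hcast, norm_mul, hnormc, Complex.norm_real, Real.norm_eq_abs, abs_of_nonneg hL0]
    rw [mul_pow, div_pow, one_pow, Real.sq_sqrt hd'.le]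
    ring
  · rintro t ⟨U, V, rfl⟩
    exact hub U V
  · have hks : (∑ i, lam i) ^ 2 ≤ k := by
      have h := Finset.sum_mul_sq_le_sq_mul_sq Finset.univ (fun _ => (1:ℝ)) lam
      simpa [hnorm, Finset.card_univ] using h
    exact div_le_div_of_nonneg_right hks hd'.le
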